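/- arXiv:2406.12097 — 3 statements merged into one kernel-verified Lean document; each statement's English description precedes it below -/
import Mathlib

section
/- There exists an absolute constant k₀ > 0 such that the following holds. Fix N ≥ 2, an N-ary tree V, and radially decaying weights with parameter ε ≤ k₀/N. Then for every w ∈ V one has 0 ≤ Ψ(w) < 2, and for any distinct leaves v,w ∈ ∂V with v < w one has 0 ≤ Ψ(v) < Ψ(w) < 2 (i.e., Ψ restricted to ∂V is strictly order preserving). -/
open MeasureTheory Set Metric
open scoped Classical

noncomputable section

abbrev Pt : Type := EuclideanSpace ℝ (Fin 2)

/-- The point `(a, b)` of the Euclidean plane. -/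
def pt (a b : ℝ) : Pt := WithLp.toLp 2 ![a, b]

/-- `V` is an `N`-ary tree: a finite prefix-closed set of strings over the alphabet
`{0, …, N−1}` containing the empty string (the root), in which every non-leaf node
has at least `2` (and, automatically, at most `N`) children. -/
def IsNaryTree (N : ℕ) (V : Finset (List ℕ)) : Prop :=
  [] ∈ V ∧
  (∀ v ∈ V, ∀ u : List ℕ, u <+: v → u ∈ V) ∧
  (∀ v ∈ V, ∀ i ∈ v, i < N) ∧
  (∀ v ∈ V, (∃ a : ℕ, v ++ [a] ∈ V) →
    2 ≤ ((Finset.range N).filter (fun a => v ++ [a] ∈ V)).card)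

/-- `v` is a leaf of `V`. -/
def IsLeaf (V : Finset (List ℕ)) (v : List ℕ) : Prop :=
  v ∈ V ∧ ∀ a : ℕ, v ++ [a] ∉ V

/-- The tree has depth at least one, i.e. the root is not a leaf. -/
def DepthAtLeastOne (V : Finset (List ℕ)) : Prop := ∃ a : ℕ, [a] ∈ V

/-- Radially decaying weights with parameter `ε` (with the convention `W ∅ = 1`). -/
def RadiallyDecaying (V : Finset (List ℕ)) (W : List ℕ → ℝ) (ε : ℝ) : Prop :=
  W [] = 1 ∧ (∀ v ∈ V, 0 < W v) ∧ ∀ v ∈ V, v ≠ [] → W v ≤ ε * W v.dropLast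

/-- The map `Ψ(v) = ∑_{i=1}^{d(v)} W(π_{i−1}(v))·v_i/(N−1)`. -/
def Psi (N : ℕ) (W : List ℕ → ℝ) (v : List ℕ) : ℝ :=
  ∑ i ∈ Finset.range v.length, W (v.take i) * (v.getD i 0 : ℝ) / ((N : ℝ) - 1)

/-- `Δ = min_{v ∈ ∂V} W_v`. -/
def Delta (V : Finset (List ℕ)) (W : List ℕ → ℝ) : ℝ :=
  sInf {w : ℝ | ∃ v, IsLeaf V v ∧ w = W v}

def E1set (Δ : ℝ) : Set Pt :=
  {x | (∃ n : ℤ, x 0 = (n : ℝ) * Δ) ∧ x 0 ∈ Ico (0 : ℝ) 2 ∧ x 1 = 0}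

def E2set (N : ℕ) (V : Finset (List ℕ)) (W : List ℕ → ℝ) : Set Pt :=
  {x | ∃ v, IsLeaf V v ∧ x = pt (Psi N W v) (W v)}

def Eset (N : ℕ) (V : Finset (List ℕ)) (W : List ℕ → ℝ) : Set Pt :=
  E1set (Delta V W) ∪ E2set N V W

/-- Bundle of standing hypotheses: `N ≥ 2`, `V` an `N`-ary tree, `0 < ε ≤ k₀/N`,
and radially decaying weights with parameter `ε`. -/
def TreeHyp (k₀ : ℝ) (N : ℕ) (V : Finset (List ℕ)) (W : List ℕ → ℝ) (ε : ℝ) : Prop :=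
  2 ≤ N ∧ IsNaryTree N V ∧ 0 < ε ∧ ε ≤ k₀ / N ∧ RadiallyDecaying V W ε

/-- Distance between two subsets of the plane. -/
def setDist (s t : Set Pt) : ℝ := sInf {d : ℝ | ∃ x ∈ s, ∃ y ∈ t, d = dist x y}

/-- A dyadic square arising from `Q⁰ = [−3,5)²` by `k` repeated bisections. -/
structure DSquare where
  k : ℕ
  i : ℕ
  j : ℕ
  hi : i < 2 ^ k
  hj : j < 2 ^ k

namespace DSquare

def side (Q : DSquare) : ℝ := 8 / 2 ^ Q.k

def x0 (Q : DSquare) : ℝ := -3 + Q.i * Q.side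

def y0 (Q : DSquare) : ℝ := -3 + Q.j * Q.side

/-- The (half-open) square itself, as a subset of the plane. -/
def set (Q : DSquare) : Set Pt :=
  {x | x 0 ∈ Ico Q.x0 (Q.x0 + Q.side) ∧ x 1 ∈ Ico Q.y0 (Q.y0 + Q.side)}

/-- The concentric dilate `λQ`. -/
def dil (Q : DSquare) (lam : ℝ) : Set Pt :=
  {x | |x 0 - (Q.x0 + Q.side / 2)| ≤ lam * Q.side / 2 ∧
       |x 1 - (Q.y0 + Q.side / 2)| ≤ lam * Q.side / 2}

/-- The dyadic ancestor of `Q` at generation `k' ≤ Q.k`. -/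
def anc (Q : DSquare) (k' : ℕ) (h : k' ≤ Q.k) : DSquare :=
  ⟨k', Q.i / 2 ^ (Q.k - k'), Q.j / 2 ^ (Q.k - k'), by
      have h2 : 0 < 2 ^ (Q.k - k') := pow_pos (by norm_num) _
      rw [Nat.div_lt_iff_lt_mul h2, ← pow_add, Nat.add_sub_cancel' h]
      exact Q.hi, by
      have h2 : 0 < 2 ^ (Q.k - k') := pow_pos (by norm_num) _
      rw [Nat.div_lt_iff_lt_mul h2, ← pow_add, Nat.add_sub_cancel' h]
      exact Q.hj⟩

end DSquare

def Q0set : Set Pt := {x | x 0 ∈ Ico (-3 : ℝ) 5 ∧ x 1 ∈ Ico (-3 : ℝ) 5}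

/-- `Q` belongs to the Whitney decomposition `𝒲` of `Q⁰` relative to `E`:
`3Q ∩ E` has at most one point, while `3Q'' ∩ E` has at least two points for every
proper dyadic ancestor `Q''` of `Q`. -/
def InWhitney (E : Set Pt) (Q : DSquare) : Prop :=
  (Q.dil 3 ∩ E).Subsingleton ∧
  ∀ k' : ℕ, ∀ h : k' < Q.k, ¬ ((Q.anc k' h.le).dil 3 ∩ E).Subsingleton

/-- `Q ↔ Q'`, i.e. `1.1Q ∩ 1.1Q' ≠ ∅`. -/
def Touch (Q Q' : DSquare) : Prop := (Q.dil 1.1 ∩ Q'.dil 1.1).Nonempty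

/-- `‖F‖_{L^{2,p}(Ω)}^p = ∫_Ω |∇²F|^p`. -/
def sobEnergy (p : ℝ) (Ω : Set Pt) (F : Pt → ℝ) : ℝ :=
  ∫ x in Ω, ‖iteratedFDeriv ℝ 2 F x‖ ^ p

/-- The seminorm `‖F‖_{L^{2,p}(Ω)}`. -/
def sobNorm (p : ℝ) (Ω : Set Pt) (F : Pt → ℝ) : ℝ := sobEnergy p Ω F ^ (1 / p)

/-- Membership in the homogeneous Sobolev space `L^{2,p}(ℝ²)` (we work with `C²`
representatives with finite seminorm). -/
def MemSob (p : ℝ) (F : Pt → ℝ) : Prop :=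
  ContDiff ℝ 2 F ∧ Integrable fun x => ‖iteratedFDeriv ℝ 2 F x‖ ^ p

/-- The trace seminorm `‖f‖_{L^{2,p}(E)}` of `f : E → ℝ`. -/
def traceSobNorm (p : ℝ) (E : Set Pt) (f : E → ℝ) : ℝ :=
  sInf {c : ℝ | ∃ F : Pt → ℝ, MemSob p F ∧ (∀ y : E, F y.1 = f y) ∧ c = sobNorm p univ F}

/-- `T` is a linear extension operator `L^{2,p}(E) → L^{2,p}(ℝ²)` with norm bound `M`. -/
def IsExtOpPlane (p : ℝ) (E : Set Pt) (M : ℝ) (T : (E → ℝ) →ₗ[ℝ] (Pt → ℝ)) : Prop :=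
  ∀ f : E → ℝ, (∃ F : Pt → ℝ, MemSob p F ∧ ∀ y : E, F y.1 = f y) →
    MemSob p (T f) ∧ (∀ y : E, T f y.1 = f y) ∧
      sobNorm p univ (T f) ≤ M * traceSobNorm p E f

/-- `‖Φ‖_{L^{1,p}(V)}^p = ∑_{v ∈ V₀} |Φ(v) − Φ(π(v))|^p W_v^{2−p}`. -/
def treeEnergy (p : ℝ) (V : Finset (List ℕ)) (W : List ℕ → ℝ) (Φ : List ℕ → ℝ) : ℝ :=
  ∑ v ∈ V.erase [], |Φ v - Φ v.dropLast| ^ p * W v ^ (2 - p)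

def treeNorm (p : ℝ) (V : Finset (List ℕ)) (W : List ℕ → ℝ) (Φ : List ℕ → ℝ) : ℝ :=
  treeEnergy p V W Φ ^ (1 / p)

/-- The type of leaves of `V`. -/
def Leaves (V : Finset (List ℕ)) : Type := {v : List ℕ // IsLeaf V v}

/-- The trace seminorm `‖φ‖_{L^{1,p}(∂V)}`. -/
def treeTraceNorm (p : ℝ) (V : Finset (List ℕ)) (W : List ℕ → ℝ) (φ : Leaves V → ℝ) : ℝ :=
  sInf {c : ℝ | ∃ Φ : List ℕ → ℝ, (∀ v : Leaves V, Φ v.1 = φ v) ∧ c = treeNorm p V W Φ}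

/-- `H` is a linear extension operator `L^{1,p}(∂V) → L^{1,p}(V)` with norm bound `M`. -/
def IsExtOpTree (p : ℝ) (V : Finset (List ℕ)) (W : List ℕ → ℝ) (M : ℝ)
    (H : (Leaves V → ℝ) →ₗ[ℝ] (List ℕ → ℝ)) : Prop :=
  ∀ φ : Leaves V → ℝ,
    (∀ v : Leaves V, H φ v.1 = φ v) ∧ treeNorm p V W (H φ) ≤ M * treeTraceNorm p V W φ

/-- Longest common prefix of two strings (the lowest common ancestor). -/
def lcp : List ℕ → List ℕ → List ℕ
  | a :: as, b :: bs => if a = b then a :: lcp as bs else []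
  | _, _ => []

/-- The cluster `C_v ⊆ E₂` associated to a vertex `v ∈ V`. -/
def Cluster (N : ℕ) (V : Finset (List ℕ)) (W : List ℕ → ℝ) (v : List ℕ) : Set Pt :=
  {x | ∃ u, IsLeaf V u ∧ v <+: u ∧ x = pt (Psi N W u) (W u)}

/-- The average `(∂₂G)_S` of the vertical derivative of `G` over `S`. -/
def d2avg (S : Set Pt) (G : Pt → ℝ) : ℝ :=
  ⨍ x in S, fderiv ℝ G x (EuclideanSpace.single 1 1)

end


section Statement2Aux

private lemma lcp_prefix_left' : ∀ a b : List ℕ, lcp a b <+: a := by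
  intro a
  induction a with
  | nil => intro b; cases b <;> simp [lcp]
  | cons x xs ih =>
    intro b
    cases b with
    | nil => simp [lcp]
    | cons y ys =>
      by_cases h : x = y
      · simpa [lcp, h] using ih ys
      · simp [lcp, h]

private lemma lcp_prefix_right' : ∀ a b : List ℕ, lcp a b <+: b := by
  intro a
  induction a with
  | nil => intro b; cases b <;> simp [lcp]
  | cons x xs ih =>
    intro b
    cases b with
    | nil => simp [lcp]
    | cons y ys =>
      by_cases h : x = y
      · subst h; simpa [lcp] using ih ys
      · simp [lcp, h]

private lemma take_of_prefix' {p v : List ℕ} (h : p <+: v) {i : ℕ} (hi : i ≤ p.length) :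
    v.take i = p.take i := by
  obtain ⟨s, rfl⟩ := h
  rw [List.take_append, Nat.sub_eq_zero_of_le hi]
  simp

private lemma getD_of_prefix' {p v : List ℕ} (h : p <+: v) {i : ℕ} (hi : i < p.length) :
    v.getD i 0 = p.getD i 0 := by
  obtain ⟨s, rfl⟩ := h
  rw [List.getD_append _ _ _ _ hi]

private lemma dropLast_take' (l : List ℕ) (i : ℕ) (h : i + 1 ≤ l.length) :
    (l.take (i+1)).dropLast = l.take i := by
  rw [List.dropLast_eq_take, List.take_take, List.length_take]
  congr 1
  omega

private lemma geomB' {ε : ℝ} (h0 : 0 ≤ ε) (h : ε ≤ 1/2) (n : ℕ) :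
    ∑ i ∈ Finset.range n, ε ^ i ≤ 1 + 2 * ε := by
  induction n with
  | zero => simp; nlinarith
  | succ n ih =>
    rw [geom_sum_succ]
    nlinarith [mul_le_mul_of_nonneg_left ih h0]

private lemma wdecay' {N : ℕ} {V : Finset (List ℕ)} {W : List ℕ → ℝ} {ε : ℝ}
    (hTree : IsNaryTree N V) (hR : RadiallyDecaying V W ε) (hε : 0 < ε)
    {v : List ℕ} (hv : v ∈ V) (m : ℕ) :
    ∀ i, m ≤ i → i ≤ v.length → W (v.take i) ≤ ε ^ (i - m) * W (v.take m) := by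
  intro i
  induction i with
  | zero =>
    intro h1 _
    have : m = 0 := Nat.le_zero.mp h1
    subst this; simp
  | succ i ih =>
    intro h1 h2
    rcases Nat.eq_or_lt_of_le h1 with rfl | h1'
    · simp
    · have hm : m ≤ i := Nat.lt_succ_iff.mp h1'
      have hi : i ≤ v.length := by omega
      have hmem : v.take (i+1) ∈ V := hTree.2.1 v hv _ (List.take_prefix _ _)
      have hne : v.take (i+1) ≠ [] := by
        have hlen : (v.take (i+1)).length = i+1 := by rw [List.length_take]; omega
        intro h
        rw [h] at hlen
        simp at hlen
      have hstep := hR.2.2 _ hmem hne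
      rw [dropLast_take' v i h2] at hstep
      have hkey : i + 1 - m = (i - m) + 1 := by omega
      calc W (v.take (i+1)) ≤ ε * W (v.take i) := hstep
        _ ≤ ε * (ε ^ (i - m) * W (v.take m)) :=
            mul_le_mul_of_nonneg_left (ih hm hi) hε.le
        _ = ε ^ (i + 1 - m) * W (v.take m) := by rw [hkey, pow_succ]; ring

end Statement2Aux

/-- part of Lemma 2 of the paper: `0 ≤ Ψ < 2` on `V`, and `Ψ`
restricted to the leaves is strictly order preserving. -/


theorem statement2 :
    ∃ k₀ : ℝ, 0 < k₀ ∧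
      ∀ (N : ℕ) (V : Finset (List ℕ)) (W : List ℕ → ℝ) (ε : ℝ),
        TreeHyp k₀ N V W ε →
          (∀ w ∈ V, 0 ≤ Psi N W w ∧ Psi N W w < 2) ∧
          (∀ v w : List ℕ, IsLeaf V v → IsLeaf V w → v ≠ w →
            v.getD (lcp v w).length 0 < w.getD (lcp v w).length 0 →
            Psi N W v < Psi N W w) := by
  refine ⟨1/2, by norm_num, ?_⟩
  intro N V W ε hT
  obtain ⟨hN, hTree, hε, hεk, hW⟩ := hT
  obtain ⟨hW1, hWpos, hWdec⟩ := hW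
  have hNR : (2:ℝ) ≤ (N:ℝ) := by exact_mod_cast hN
  have hNpos : (0:ℝ) < (N:ℝ) := by linarith
  have hN1pos : (0:ℝ) < (N:ℝ) - 1 := by linarith
  have hεN : ε * N ≤ 1/2 := by
    have := (le_div_iff₀ hNpos).mp hεk
    linarith
  have hε4 : ε ≤ 1/4 := by nlinarith
  have hε2 : ε ≤ 1/2 := by linarith
  have hterm_nonneg : ∀ u ∈ V, ∀ i : ℕ,
      0 ≤ W (u.take i) * (u.getD i 0 : ℝ) / ((N:ℝ)-1) := by
    intro u hu i
    have h1 : 0 < W (u.take i) := hWpos _ (hTree.2.1 u hu _ (List.take_prefix _ _))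
    have h2 : (0:ℝ) ≤ (u.getD i 0 : ℝ) := Nat.cast_nonneg _
    exact div_nonneg (mul_nonneg h1.le h2) hN1pos.le
  have hterm_le : ∀ u ∈ V, ∀ i, i < u.length →
      W (u.take i) * (u.getD i 0 : ℝ) / ((N:ℝ)-1) ≤ W (u.take i) := by
    intro u hu i hi
    have hpos := hWpos _ (hTree.2.1 u hu _ (List.take_prefix i u))
    have hlt : u.getD i 0 < N := by
      rw [List.getD_eq_getElem u 0 hi]
      exact hTree.2.2.1 u hu _ (List.getElem_mem hi)
    have hc : (u.getD i 0 : ℝ) ≤ (N:ℝ) - 1 := by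
      have : ((u.getD i 0 : ℕ) : ℝ) + 1 ≤ (N:ℝ) := by exact_mod_cast Nat.succ_le_of_lt hlt
      linarith
    rw [div_le_iff₀ hN1pos]
    nlinarith
  have hRD : RadiallyDecaying V W ε := ⟨hW1, hWpos, hWdec⟩
  have hbound : ∀ w ∈ V, 0 ≤ Psi N W w ∧ Psi N W w < 2 := by
    intro w hw
    constructor
    · exact Finset.sum_nonneg fun i _ => hterm_nonneg w hw i
    · have hle : ∀ i ∈ Finset.range w.length,
          W (w.take i) * (w.getD i 0 : ℝ) / ((N:ℝ)-1) ≤ ε ^ i := by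
        intro i hi
        rw [Finset.mem_range] at hi
        have h1 := hterm_le w hw i hi
        have h2 := wdecay' hTree hRD hε hw 0 i (Nat.zero_le i) hi.le
        simp only [Nat.sub_zero, List.take_zero, hW1, mul_one] at h2
        linarith
      calc Psi N W w ≤ ∑ i ∈ Finset.range w.length, ε ^ i := Finset.sum_le_sum hle
        _ ≤ 1 + 2 * ε := geomB' hε.le hε2 _
        _ < 2 := by linarith
  refine ⟨hbound, ?_⟩
  intro v w hv hw hne hlt
  set p := lcp v w with hp
  set m := p.length with hm
  have hpv : p <+: v := lcp_prefix_left' v w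
  have hpw : p <+: w := lcp_prefix_right' v w
  have hvV : v ∈ V := hv.1
  have hwV : w ∈ V := hw.1
  have hpV : p ∈ V := hTree.2.1 v hvV p hpv
  have hWp : 0 < W p := hWpos p hpV
  have hmv : m ≤ v.length := hpv.length_le
  have hmw : m ≤ w.length := hpw.length_le
  have hmw' : m < w.length := by
    by_contra h
    push_neg at h
    rw [List.getD_eq_default w 0 h] at hlt
    omega
  have hptake_v : v.take m = p := (List.prefix_iff_eq_take.mp hpv).symm
  have hptake_w : w.take m = p := (List.prefix_iff_eq_take.mp hpw).symm
  have hsplit_v : Psi N W v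
      = (∑ i ∈ Finset.Ico 0 m, W (v.take i) * (v.getD i 0 : ℝ) / ((N:ℝ)-1))
      + ∑ i ∈ Finset.Ico m v.length, W (v.take i) * (v.getD i 0 : ℝ) / ((N:ℝ)-1) := by
    rw [Psi, Finset.range_eq_Ico, ← Finset.sum_Ico_consecutive _ (Nat.zero_le m) hmv]
  have hsplit_w : Psi N W w
      = (∑ i ∈ Finset.Ico 0 m, W (w.take i) * (w.getD i 0 : ℝ) / ((N:ℝ)-1))
      + ∑ i ∈ Finset.Ico m w.length, W (w.take i) * (w.getD i 0 : ℝ) / ((N:ℝ)-1) := by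
    rw [Psi, Finset.range_eq_Ico, ← Finset.sum_Ico_consecutive _ (Nat.zero_le m) hmw]
  have hcommon : (∑ i ∈ Finset.Ico 0 m, W (v.take i) * (v.getD i 0 : ℝ) / ((N:ℝ)-1))
      = ∑ i ∈ Finset.Ico 0 m, W (w.take i) * (w.getD i 0 : ℝ) / ((N:ℝ)-1) := by
    refine Finset.sum_congr rfl fun i hi => ?_
    rw [Finset.mem_Ico] at hi
    rw [take_of_prefix' hpv hi.2.le, take_of_prefix' hpw hi.2.le,
        getD_of_prefix' hpv hi.2, getD_of_prefix' hpw hi.2]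
  -- lower bound for the w-tail
  have hwtail : W p * ((w.getD m 0 : ℕ) : ℝ) / ((N:ℝ)-1)
      ≤ ∑ i ∈ Finset.Ico m w.length, W (w.take i) * (w.getD i 0 : ℝ) / ((N:ℝ)-1) := by
    rw [Finset.sum_eq_sum_Ico_succ_bot hmw']
    have h1 : 0 ≤ ∑ i ∈ Finset.Ico (m+1) w.length,
        W (w.take i) * (w.getD i 0 : ℝ) / ((N:ℝ)-1) :=
      Finset.sum_nonneg fun i _ => hterm_nonneg w hwV i
    rw [hptake_w]
    linarith
  -- upper bound for the v-tail (strict)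
  have hvtail : (∑ i ∈ Finset.Ico m v.length, W (v.take i) * (v.getD i 0 : ℝ) / ((N:ℝ)-1))
      < W p * (((v.getD m 0 : ℕ) : ℝ) + 1) / ((N:ℝ)-1) := by
    rcases Nat.eq_or_lt_of_le hmv with heq | hmv'
    · rw [← heq]
      simp only [Finset.Ico_self, Finset.sum_empty]
      rw [List.getD_eq_default v 0 heq.ge]
      push_cast
      positivity
    · rw [Finset.sum_eq_sum_Ico_succ_bot hmv', hptake_v]
      have htail : (∑ i ∈ Finset.Ico (m+1) v.length,
          W (v.take i) * (v.getD i 0 : ℝ) / ((N:ℝ)-1)) ≤ 2 * ε * W p := by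
        have step1 : (∑ i ∈ Finset.Ico (m+1) v.length,
            W (v.take i) * (v.getD i 0 : ℝ) / ((N:ℝ)-1))
            ≤ ∑ i ∈ Finset.Ico (m+1) v.length, ε ^ (i - m) * W p := by
          refine Finset.sum_le_sum fun i hi => ?_
          rw [Finset.mem_Ico] at hi
          have h1 := hterm_le v hvV i hi.2
          have h2 := wdecay' hTree hRD hε hvV m i (by omega) hi.2.le
          rw [hptake_v] at h2
          linarith
        have step2 : (∑ i ∈ Finset.Ico (m+1) v.length, ε ^ (i - m) * W p)
            = ε * (∑ j ∈ Finset.range (v.length - (m+1)), ε ^ j) * W p := by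
          rw [Finset.sum_Ico_eq_sum_range, Finset.mul_sum, Finset.sum_mul]
          refine Finset.sum_congr rfl fun j _ => ?_
          have : m + 1 + j - m = j + 1 := by omega
          rw [this, pow_succ]
          ring
        have step3 : ε * (∑ j ∈ Finset.range (v.length - (m+1)), ε ^ j) * W p
            ≤ ε * (1 + 2 * ε) * W p := by
          have := geomB' hε.le hε2 (v.length - (m+1))
          have h1 : ε * (∑ j ∈ Finset.range (v.length - (m+1)), ε ^ j) ≤ ε * (1 + 2 * ε) :=
            mul_le_mul_of_nonneg_left this hε.le
          exact mul_le_mul_of_nonneg_right h1 hWp.le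
        have step4 : ε * (1 + 2 * ε) * W p ≤ 2 * ε * W p := by
          have h24 : ε * (1 + 2 * ε) ≤ 2 * ε := by nlinarith
          exact mul_le_mul_of_nonneg_right h24 hWp.le
        linarith
      have hstrict : 2 * ε * W p < W p / ((N:ℝ)-1) := by
        rw [lt_div_iff₀ hN1pos]
        nlinarith
      have : W p * ((v.getD m 0 : ℕ) : ℝ) / ((N:ℝ)-1) + W p / ((N:ℝ)-1)
          = W p * (((v.getD m 0 : ℕ) : ℝ) + 1) / ((N:ℝ)-1) := by ring
      linarith
  have hcast : ((v.getD m 0 : ℕ) : ℝ) + 1 ≤ ((w.getD m 0 : ℕ) : ℝ) := by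
    exact_mod_cast Nat.succ_le_of_lt hlt
  have hmid : W p * (((v.getD m 0 : ℕ) : ℝ) + 1) / ((N:ℝ)-1)
      ≤ W p * ((w.getD m 0 : ℕ) : ℝ) / ((N:ℝ)-1) := by
    have h := mul_le_mul_of_nonneg_left hcast hWp.le
    rw [div_le_div_iff₀ hN1pos hN1pos]
    nlinarith [mul_le_mul_of_nonneg_right h hN1pos.le]
  rw [hsplit_v, hsplit_w, hcommon]
  linarith
end

section
/- There exists an absolute constant k₀ > 0 such that the following holds. Fix N ≥ 2, an N-ary tree V of depth L ≥ 1, and radially decaying weights with parameter ε ≤ k₀/N, and let E = E₁ ∪ E₂ be the associated set. Then E ⊂ [0,2) × [0,2), and E is Δ-separated, i.e., |x − y| ≥ Δ for all distinct x,y ∈ E. -/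
open MeasureTheory Set Metric
open scoped Classical

section Statement4Aux

private lemma s4_exists_diverge : ∀ u v : List ℕ, ¬ u <+: v → ¬ v <+: u →
    ∃ k, u.take k = v.take k ∧ k < u.length ∧ k < v.length ∧ u.getD k 0 ≠ v.getD k 0
  | [], _, h, _ => absurd List.nil_prefix h
  | _ :: _, [], _, h => absurd List.nil_prefix h
  | a :: u', b :: v', h1, h2 => by
    by_cases hab : a = b
    · subst hab
      have h1' : ¬ u' <+: v' := fun hp => h1 (List.cons_prefix_cons.2 ⟨rfl, hp⟩)
      have h2' : ¬ v' <+: u' := fun hp => h2 (List.cons_prefix_cons.2 ⟨rfl, hp⟩)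
      obtain ⟨k, ht, hu, hv, hd⟩ := s4_exists_diverge u' v' h1' h2'
      exact ⟨k + 1, by simpa [List.take_succ_cons] using ht,
        Nat.succ_lt_succ hu, Nat.succ_lt_succ hv, by simpa using hd⟩
    · exact ⟨0, rfl, Nat.succ_pos _, Nat.succ_pos _, by simpa using hab⟩

private lemma s4_take_concat (l : List ℕ) (n : ℕ) (h : n < l.length) :
    l.take (n + 1) = l.take n ++ [l.getD n 0] := by
  rw [List.take_succ]
  simp [List.getD, List.getElem?_eq_getElem h]

private lemma s4_getD_take (l : List ℕ) {i k : ℕ} (h : i < k) :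
    (l.take k).getD i 0 = l.getD i 0 := by
  simp [List.getD, List.getElem?_take_of_lt (l := l) h]

variable {N : ℕ} {V : Finset (List ℕ)} {W : List ℕ → ℝ} {ε : ℝ}

private lemma s4_take_mem (tree : IsNaryTree N V) {v : List ℕ} (hv : v ∈ V) (i : ℕ) :
    v.take i ∈ V :=
  tree.2.1 v hv _ (List.take_prefix i v)

private lemma s4_digit_le (hN : 2 ≤ N) (tree : IsNaryTree N V) {v : List ℕ} (hv : v ∈ V)
    {i : ℕ} (hi : i < v.length) : (v.getD i 0 : ℝ) ≤ (N : ℝ) - 1 := by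
  have hmem : v.getD i 0 ∈ v := by
    rw [List.getD_eq_getElem _ _ hi]
    exact List.getElem_mem _
  have hd := tree.2.2.1 v hv _ hmem
  have : (v.getD i 0 : ℝ) + 1 ≤ (N : ℝ) := by exact_mod_cast hd
  linarith

private lemma s4_W_take_le' (tree : IsNaryTree N V) (rd : RadiallyDecaying V W ε)
    (hε0 : 0 < ε) {v : List ℕ} (hv : v ∈ V) :
    ∀ j, j ≤ v.length → ∀ i, i ≤ j → W (v.take j) ≤ ε ^ (j - i) * W (v.take i) := by
  intro j
  induction j with
  | zero =>
    intro _ i hi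
    interval_cases i
    simp
  | succ j ih =>
    intro hj i hi
    rcases Nat.eq_or_lt_of_le hi with h | h
    · subst h; simp
    · have hi' : i ≤ j := Nat.lt_succ_iff.1 h
      have hjlt : j < v.length := hj
      have hconcat : v.take (j + 1) = v.take j ++ [v.getD j 0] := s4_take_concat v j hjlt
      have hmem : v.take (j + 1) ∈ V := s4_take_mem tree hv _
      have hne : v.take (j + 1) ≠ [] := by rw [hconcat]; simp
      have hdl : (v.take (j + 1)).dropLast = v.take j := by
        rw [hconcat, List.dropLast_concat]
      have h1 : W (v.take (j + 1)) ≤ ε * W (v.take j) := by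
        have := rd.2.2 _ hmem hne
        rwa [hdl] at this
      have h2 := ih (le_of_lt hjlt) i hi'
      calc W (v.take (j + 1)) ≤ ε * W (v.take j) := h1
        _ ≤ ε * (ε ^ (j - i) * W (v.take i)) := mul_le_mul_of_nonneg_left h2 hε0.le
        _ = ε ^ (j + 1 - i) * W (v.take i) := by
            rw [show j + 1 - i = (j - i) + 1 by omega, pow_succ]; ring

private lemma s4_W_le (tree : IsNaryTree N V) (rd : RadiallyDecaying V W ε)
    (hε0 : 0 < ε) {v : List ℕ} (hv : v ∈ V) : W v ≤ ε ^ v.length := by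
  have := s4_W_take_le' tree rd hε0 hv v.length le_rfl 0 (Nat.zero_le _)
  simpa [rd.1] using this

private lemma s4_geom_lt_two (hε0 : 0 < ε) (hε : ε ≤ 1/2) (n : ℕ) :
    ∑ i ∈ Finset.range n, ε ^ i < 2 := by
  have hne : ε ≠ 1 := by linarith
  rw [geom_sum_eq hne]
  rw [div_lt_iff_of_neg (by linarith : ε - 1 < 0)]
  nlinarith [pow_pos hε0 n]

private lemma s4_Psi_nonneg (hN : 2 ≤ N) (tree : IsNaryTree N V) (rd : RadiallyDecaying V W ε)
    {v : List ℕ} (hv : v ∈ V) : 0 ≤ Psi N W v := by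
  apply Finset.sum_nonneg
  intro i _
  have hW : 0 < W (v.take i) := rd.2.1 _ (s4_take_mem tree hv i)
  have hN1 : (0:ℝ) < (N : ℝ) - 1 := by
    have : (2:ℝ) ≤ (N:ℝ) := by exact_mod_cast hN
    linarith
  positivity

private lemma s4_term_le (hN : 2 ≤ N) (tree : IsNaryTree N V) (rd : RadiallyDecaying V W ε)
    (hε0 : 0 < ε) {v : List ℕ} (hv : v ∈ V) {i : ℕ} (hi : i < v.length) :
    W (v.take i) * (v.getD i 0 : ℝ) / ((N : ℝ) - 1) ≤ ε ^ i := by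
  have hN1 : (0:ℝ) < (N : ℝ) - 1 := by
    have : (2:ℝ) ≤ (N:ℝ) := by exact_mod_cast hN
    linarith
  have h1 : W (v.take i) ≤ ε ^ i := by
    have := s4_W_take_le' tree rd hε0 hv i hi.le 0 (Nat.zero_le _)
    simpa [rd.1] using this
  have h2 : (v.getD i 0 : ℝ) ≤ (N : ℝ) - 1 := s4_digit_le hN tree hv hi
  have hW : 0 < W (v.take i) := rd.2.1 _ (s4_take_mem tree hv i)
  have hd0 : (0:ℝ) ≤ (v.getD i 0 : ℝ) := Nat.cast_nonneg _
  calc W (v.take i) * (v.getD i 0 : ℝ) / ((N : ℝ) - 1)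
      ≤ ε ^ i * ((N : ℝ) - 1) / ((N : ℝ) - 1) := by gcongr
    _ = ε ^ i := by field_simp

private lemma s4_Psi_lt_two (hN : 2 ≤ N) (tree : IsNaryTree N V) (rd : RadiallyDecaying V W ε)
    (hε0 : 0 < ε) (hε : ε ≤ 1/2) {v : List ℕ} (hv : v ∈ V) : Psi N W v < 2 := by
  calc Psi N W v ≤ ∑ i ∈ Finset.range v.length, ε ^ i := by
        apply Finset.sum_le_sum
        intro i hi
        exact s4_term_le hN tree rd hε0 hv (Finset.mem_range.1 hi)
    _ < 2 := s4_geom_lt_two hε0 hε _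

private lemma s4_tail_le (hN : 2 ≤ N) (tree : IsNaryTree N V) (rd : RadiallyDecaying V W ε)
    (hε0 : 0 < ε) (hε : ε ≤ 1/2) {v : List ℕ} (hv : v ∈ V) {k : ℕ} (hk : k < v.length) :
    ∑ i ∈ Finset.Ico (k+1) v.length, W (v.take i) * (v.getD i 0 : ℝ) / ((N : ℝ) - 1)
      ≤ 2 * (ε * W (v.take k)) := by
  have hWk : 0 < W (v.take k) := rd.2.1 _ (s4_take_mem tree hv k)
  have hN1 : (0:ℝ) < (N : ℝ) - 1 := by
    have : (2:ℝ) ≤ (N:ℝ) := by exact_mod_cast hN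
    linarith
  calc ∑ i ∈ Finset.Ico (k+1) v.length, W (v.take i) * (v.getD i 0 : ℝ) / ((N : ℝ) - 1)
      ≤ ∑ i ∈ Finset.Ico (k+1) v.length, ε ^ (i - k) * W (v.take k) := by
        apply Finset.sum_le_sum
        intro i hi
        obtain ⟨hi1, hi2⟩ := Finset.mem_Ico.1 hi
        have hWle : W (v.take i) ≤ ε ^ (i - k) * W (v.take k) :=
          s4_W_take_le' tree rd hε0 hv i hi2.le k (by omega)
        have h2 : (v.getD i 0 : ℝ) ≤ (N : ℝ) - 1 := s4_digit_le hN tree hv hi2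
        have hW : 0 < W (v.take i) := rd.2.1 _ (s4_take_mem tree hv i)
        have hd0 : (0:ℝ) ≤ (v.getD i 0 : ℝ) := Nat.cast_nonneg _
        have hεk : (0:ℝ) ≤ ε ^ (i-k) * W (v.take k) := by positivity
        calc W (v.take i) * (v.getD i 0 : ℝ) / ((N : ℝ) - 1)
            ≤ (ε ^ (i-k) * W (v.take k)) * ((N : ℝ) - 1) / ((N : ℝ) - 1) := by gcongr
          _ = ε ^ (i-k) * W (v.take k) := by field_simp
    _ = ∑ j ∈ Finset.range (v.length - (k+1)), ε ^ (j+1) * W (v.take k) := by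
        rw [Finset.sum_Ico_eq_sum_range]
        exact Finset.sum_congr rfl fun j _ => by congr 2; omega
    _ = (∑ j ∈ Finset.range (v.length - (k+1)), ε ^ j) * (ε * W (v.take k)) := by
        rw [Finset.sum_mul]
        exact Finset.sum_congr rfl fun j _ => by rw [pow_succ]; ring
    _ ≤ 2 * (ε * W (v.take k)) := by
        apply mul_le_mul_of_nonneg_right (s4_geom_lt_two hε0 hε _).le
        positivity

private lemma s4_Psi_split (hk : k < v.length) :
    Psi N W v = (∑ i ∈ Finset.range k, W (v.take i) * (v.getD i 0 : ℝ) / ((N : ℝ) - 1))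
      + W (v.take k) * (v.getD k 0 : ℝ) / ((N : ℝ) - 1)
      + ∑ i ∈ Finset.Ico (k+1) v.length, W (v.take i) * (v.getD i 0 : ℝ) / ((N : ℝ) - 1) := by
  unfold Psi
  rw [Finset.range_eq_Ico, ← Finset.sum_Ico_consecutive _ (Nat.zero_le (k+1)) hk,
    ← Finset.range_eq_Ico, Finset.sum_range_succ]

private lemma s4_exists_leaf (tree : IsNaryTree N V) : ∃ v, IsLeaf V v := by
  obtain ⟨v, hv, hmax⟩ := V.exists_max_image List.length ⟨[], tree.1⟩
  refine ⟨v, hv, fun a ha => ?_⟩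
  have := hmax _ ha
  simp at this

private lemma s4_delta_finite :
    {w : ℝ | ∃ v, IsLeaf V v ∧ w = W v}.Finite := by
  apply Set.Finite.subset (V.finite_toSet.image W)
  rintro w ⟨v, hv, rfl⟩
  exact ⟨v, hv.1, rfl⟩

private lemma s4_delta_le (hu : IsLeaf V u) : Delta V W ≤ W u :=
  csInf_le s4_delta_finite.bddBelow ⟨u, hu, rfl⟩

private lemma s4_delta_pos (tree : IsNaryTree N V) (rd : RadiallyDecaying V W ε) :
    0 < Delta V W := by
  obtain ⟨v, hv⟩ := s4_exists_leaf tree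
  have hne : {w : ℝ | ∃ v, IsLeaf V v ∧ w = W v}.Nonempty := ⟨W v, v, hv, rfl⟩
  obtain ⟨u, hu, heq⟩ := hne.csInf_mem s4_delta_finite
  rw [Delta, heq]
  exact rd.2.1 _ hu.1

private lemma s4_leaf_not_prefix (tree : IsNaryTree N V) {u v : List ℕ}
    (hu : IsLeaf V u) (hv : IsLeaf V v) (hne : u ≠ v) : ¬ u <+: v := by
  intro hp
  have hlen : u.length < v.length :=
    lt_of_le_of_ne hp.length_le fun he => hne (hp.eq_of_length he)
  have htake : v.take u.length = u := (List.prefix_iff_eq_take.1 hp).symm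
  have hmem : v.take (u.length + 1) ∈ V := s4_take_mem tree hv.1 _
  rw [s4_take_concat v u.length hlen, htake] at hmem
  exact hu.2 _ hmem

private lemma s4_digit_gap {a b : ℕ} (h : a ≠ b) : (1:ℝ) ≤ |(a:ℝ) - (b:ℝ)| := by
  have h2 : (a:ℤ) ≠ (b:ℤ) := by exact_mod_cast h
  have : ((1:ℤ):ℝ) ≤ |((a - b : ℤ):ℝ)| := by
    rw [← Int.cast_abs]
    exact_mod_cast Int.one_le_abs (sub_ne_zero.2 h2)
  push_cast at this
  simpa using this

private lemma s4_leaf_sep (hN : 2 ≤ N) (tree : IsNaryTree N V) (rd : RadiallyDecaying V W ε)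
    (hε0 : 0 < ε) (hεN : ε ≤ 1 / (10 * N)) {u v : List ℕ}
    (hu : IsLeaf V u) (hv : IsLeaf V v) (hne : u ≠ v) :
    Delta V W ≤ |Psi N W u - Psi N W v| := by
  have hNR : (2:ℝ) ≤ (N:ℝ) := by exact_mod_cast hN
  have hN1 : (0:ℝ) < (N : ℝ) - 1 := by linarith
  have hε : ε ≤ 1/2 := by
    calc ε ≤ 1 / (10 * N) := hεN
      _ ≤ 1/2 := by
        rw [div_le_div_iff₀ (by linarith) (by norm_num)]
        linarith
  obtain ⟨k, htake, hku, hkv, hdig⟩ :=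
    s4_exists_diverge u v (s4_leaf_not_prefix tree hu hv hne)
      (s4_leaf_not_prefix tree hv hu (Ne.symm hne))
  set Wk := W (u.take k) with hWkdef
  have hWk : 0 < Wk := rd.2.1 _ (s4_take_mem tree hu.1 k)
  -- common head
  have hhead : ∀ i ∈ Finset.range k,
      W (u.take i) * (u.getD i 0 : ℝ) / ((N : ℝ) - 1)
        = W (v.take i) * (v.getD i 0 : ℝ) / ((N : ℝ) - 1) := by
    intro i hi
    have hik : i < k := Finset.mem_range.1 hi
    have h1 : u.take i = v.take i := by
      have := congrArg (List.take i) htake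
      simpa [List.take_take, min_eq_left hik.le] using this
    have h2 : u.getD i 0 = v.getD i 0 := by
      rw [← s4_getD_take u hik, ← s4_getD_take v hik, htake]
    rw [h1, h2]
  have hWkv : W (v.take k) = Wk := by rw [hWkdef, htake]
  -- split both Psi's
  have hsplitu := s4_Psi_split (N := N) (W := W) hku
  have hsplitv := s4_Psi_split (N := N) (W := W) hkv
  set Tu := ∑ i ∈ Finset.Ico (k+1) u.length, W (u.take i) * (u.getD i 0 : ℝ) / ((N : ℝ) - 1)
  set Tv := ∑ i ∈ Finset.Ico (k+1) v.length, W (v.take i) * (v.getD i 0 : ℝ) / ((N : ℝ) - 1)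
  have hTu0 : 0 ≤ Tu := Finset.sum_nonneg fun i _ => by
    have := rd.2.1 _ (s4_take_mem tree hu.1 i); positivity
  have hTv0 : 0 ≤ Tv := Finset.sum_nonneg fun i _ => by
    have := rd.2.1 _ (s4_take_mem tree hv.1 i); positivity
  have hTu : Tu ≤ 2 * (ε * Wk) := s4_tail_le hN tree rd hε0 hε hu.1 hku
  have hTv : Tv ≤ 2 * (ε * Wk) := by
    have := s4_tail_le hN tree rd hε0 hε hv.1 hkv
    rwa [hWkv] at this
  have hdiff : Psi N W u - Psi N W v
      = Wk * ((u.getD k 0 : ℝ) - (v.getD k 0 : ℝ)) / ((N : ℝ) - 1) + (Tu - Tv) := by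
    rw [hsplitu, hsplitv, Finset.sum_congr rfl hhead, hWkv]
    ring
  have hgap : (1:ℝ) ≤ |(u.getD k 0 : ℝ) - (v.getD k 0 : ℝ)| := s4_digit_gap hdig
  have hεW : (0:ℝ) ≤ ε * Wk := by positivity
  have hmain : Wk / ((N:ℝ) - 1) - 4 * (ε * Wk) ≤ |Psi N W u - Psi N W v| := by
    have h1 : Wk / ((N:ℝ) - 1)
        ≤ |Wk * ((u.getD k 0 : ℝ) - (v.getD k 0 : ℝ)) / ((N : ℝ) - 1)| := by
      rw [abs_div, abs_mul, abs_of_pos hWk, abs_of_pos hN1]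
      rw [div_le_div_iff₀ hN1 hN1]
      nlinarith [mul_le_mul_of_nonneg_left hgap hWk.le, hN1.le, hWk.le]
    have h2 : |Tu - Tv| ≤ 2 * (ε * Wk) := abs_sub_le_iff.2 ⟨by linarith, by linarith⟩
    calc Wk / ((N:ℝ) - 1) - 4 * (ε * Wk)
        ≤ |Wk * ((u.getD k 0 : ℝ) - (v.getD k 0 : ℝ)) / ((N : ℝ) - 1)| - |Tu - Tv| := by
          linarith
      _ ≤ |Wk * ((u.getD k 0 : ℝ) - (v.getD k 0 : ℝ)) / ((N : ℝ) - 1) + (Tu - Tv)| := by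
          have := abs_add_le (Wk * ((u.getD k 0 : ℝ) - (v.getD k 0 : ℝ)) / ((N : ℝ) - 1) + (Tu - Tv)) (-(Tu - Tv))
          simp only [add_neg_cancel_right, abs_neg] at this
          linarith
      _ = |Psi N W u - Psi N W v| := by rw [hdiff]
  -- Delta ≤ ε * Wk
  have hDelta : Delta V W ≤ ε * Wk := by
    have h1 : Delta V W ≤ W u := s4_delta_le hu
    have h2 : W u ≤ ε ^ (u.length - k) * Wk := by
      have := s4_W_take_le' tree rd hε0 hu.1 u.length le_rfl k hku.le
      rwa [List.take_length] at this
    have h3 : ε ^ (u.length - k) ≤ ε := by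
      calc ε ^ (u.length - k) ≤ ε ^ 1 :=
        pow_le_pow_of_le_one hε0.le (by linarith) (by omega)
        _ = ε := pow_one ε
    calc Delta V W ≤ W u := h1
      _ ≤ ε ^ (u.length - k) * Wk := h2
      _ ≤ ε * Wk := mul_le_mul_of_nonneg_right h3 hWk.le
  -- final arithmetic: ε * Wk ≤ Wk/(N-1) - 4*(ε*Wk)
  have hfinal : ε * Wk ≤ Wk / ((N:ℝ) - 1) - 4 * (ε * Wk) := by
    rw [le_sub_iff_add_le, le_div_iff₀ hN1]
    have hεN' : ε * (10 * (N:ℝ)) ≤ 1 := by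
      rw [← le_div_iff₀ (by linarith)]
      exact hεN
    nlinarith
  linarith

private lemma s4_coord_le (x y : Pt) (i : Fin 2) : |x i - y i| ≤ dist x y := by
  rw [EuclideanSpace.dist_eq, ← Real.sqrt_sq_eq_abs]
  apply Real.sqrt_le_sqrt
  rw [Fin.sum_univ_two]
  fin_cases i <;> simp [Real.dist_eq, sq_abs] <;> positivity

private lemma s4_pt_zero (a b : ℝ) : (pt a b) 0 = a := by simp [pt]

private lemma s4_pt_one (a b : ℝ) : (pt a b) 1 = b := by simp [pt]

private lemma s4_pt_ext {x y : Pt} (h0 : x 0 = y 0) (h1 : x 1 = y 1) : x = y := by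
  ext i
  fin_cases i
  · simpa using h0
  · simpa using h1

end Statement4Aux

/-- parts 1 and 2 of Lemma 3 of the paper: `E ⊂ [0,2) × [0,2)` and
`E` is `Δ`-separated. -/
theorem statement4 :
    ∃ k₀ : ℝ, 0 < k₀ ∧
      ∀ (N : ℕ) (V : Finset (List ℕ)) (W : List ℕ → ℝ) (ε : ℝ),
        TreeHyp k₀ N V W ε → DepthAtLeastOne V →
          (∀ x ∈ Eset N V W, x 0 ∈ Ico (0 : ℝ) 2 ∧ x 1 ∈ Ico (0 : ℝ) 2) ∧
          (∀ x ∈ Eset N V W, ∀ y ∈ Eset N V W, x ≠ y → Delta V W ≤ dist x y) := by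
  refine ⟨1/10, by norm_num, ?_⟩
  intro N V W ε hyp hdepth
  obtain ⟨hN, tree, hε0, hεk, rd⟩ := hyp
  have hNR : (2:ℝ) ≤ (N:ℝ) := by exact_mod_cast hN
  have hεN : ε ≤ 1 / (10 * N) := by
    calc ε ≤ (1/10) / N := hεk
      _ = 1 / (10 * N) := by rw [div_div]
  have hε2 : ε ≤ 1/2 := le_trans hεN (by
    rw [div_le_div_iff₀ (by linarith) (by norm_num)]
    linarith)
  have hΔ : 0 < Delta V W := s4_delta_pos tree rd
  constructor
  · rintro x (⟨⟨n, hxn⟩, hx0, hx1⟩ | ⟨v, hv, rfl⟩)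
    · exact ⟨hx0, by rw [hx1]; exact ⟨le_refl _, by norm_num⟩⟩
    · constructor
      · rw [s4_pt_zero]
        exact ⟨s4_Psi_nonneg hN tree rd hv.1, s4_Psi_lt_two hN tree rd hε0 hε2 hv.1⟩
      · rw [s4_pt_one]
        refine ⟨(rd.2.1 _ hv.1).le, ?_⟩
        have hlen : 1 ≤ v.length := by
          rcases v with _ | ⟨a, v'⟩
          · obtain ⟨a, ha⟩ := hdepth
            exact absurd ha (by simpa using hv.2 a)
          · simp
        have h1 := s4_W_le tree rd hε0 hv.1
        have h2 : ε ^ v.length ≤ ε := by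
          calc ε ^ v.length ≤ ε ^ 1 := pow_le_pow_of_le_one hε0.le (by linarith) hlen
            _ = ε := pow_one ε
        linarith
  · rintro x hx y hy hne
    rcases hx with ⟨⟨n, hxn⟩, hx0, hx1⟩ | ⟨u, hu, hxeq⟩ <;>
      rcases hy with ⟨⟨m, hyn⟩, hy0, hy1⟩ | ⟨v, hv, hyeq⟩
    · -- both E1
      have hnm : n ≠ m := by
        rintro rfl
        exact hne (s4_pt_ext (by rw [hxn, hyn]) (by rw [hx1, hy1]))
      have hkey : Delta V W ≤ |x 0 - y 0| := by
        rw [hxn, hyn, ← sub_mul, abs_mul, abs_of_pos hΔ]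
        have h1 : (1:ℝ) ≤ |(n:ℝ) - m| := by
          have h2 : (1:ℤ) ≤ |n - m| := Int.one_le_abs (sub_ne_zero.2 hnm)
          have h3 : ((1:ℤ):ℝ) ≤ ((|n - m| : ℤ) : ℝ) := by exact_mod_cast h2
          rw [Int.cast_abs] at h3
          push_cast at h3
          simpa using h3
        nlinarith
      exact hkey.trans (s4_coord_le x y 0)
    · -- E1, E2
      have hkey : Delta V W ≤ |x 1 - y 1| := by
        rw [hx1, hyeq, s4_pt_one, zero_sub, abs_neg, abs_of_pos (rd.2.1 _ hv.1)]
        exact s4_delta_le hv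
      exact hkey.trans (s4_coord_le x y 1)
    · -- E2, E1
      have hkey : Delta V W ≤ |x 1 - y 1| := by
        rw [hy1, hxeq, s4_pt_one, sub_zero, abs_of_pos (rd.2.1 _ hu.1)]
        exact s4_delta_le hu
      exact hkey.trans (s4_coord_le x y 1)
    · -- both E2
      have huv : u ≠ v := by
        rintro rfl
        exact hne (by rw [hxeq, hyeq])
      have hkey := s4_leaf_sep hN tree rd hε0 hεN hu hv huv
      refine hkey.trans ?_
      rw [hxeq, hyeq]
      have h := s4_coord_le (pt (Psi N W u) (W u)) (pt (Psi N W v) (W v)) 0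
      rwa [s4_pt_zero, s4_pt_zero] at h
end

section
/- There exists an absolute constant k₀ > 0 such that the following holds. Fix N ≥ 2, an N-ary tree V of depth L ≥ 1, and radially decaying weights with parameter ε ≤ k₀/N, and let E = E₁ ∪ E₂ be the associated set. Then for every x = (x⁽¹⁾, x⁽²⁾) ∈ E₂: (a) Δ ≤ x⁽²⁾ ≤ dist(x, E₁) ≤ 2·x⁽²⁾; and (b) Δ ≤ x⁽²⁾ ≤ dist(x, E₂ \ {x}). -/
open MeasureTheory Set Metric
open scoped Classical

namespace Statement5Aux

lemma pt0 (a b : ℝ) : pt a b 0 = a := rfl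
lemma pt1 (a b : ℝ) : pt a b 1 = b := rfl

lemma dist_eq_pt (x y : Pt) : dist x y = Real.sqrt ((x 0 - y 0)^2 + (x 1 - y 1)^2) := by
  rw [EuclideanSpace.dist_eq, Fin.sum_univ_two]
  simp [Real.dist_eq, sq_abs]

lemma coord0_le_dist (x y : Pt) : |x 0 - y 0| ≤ dist x y := by
  rw [dist_eq_pt]
  calc |x 0 - y 0| = Real.sqrt ((x 0 - y 0)^2) := (Real.sqrt_sq_eq_abs _).symm
  _ ≤ _ := Real.sqrt_le_sqrt (by nlinarith [sq_nonneg (x 1 - y 1)])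

lemma coord1_le_dist (x y : Pt) : |x 1 - y 1| ≤ dist x y := by
  rw [dist_eq_pt]
  calc |x 1 - y 1| = Real.sqrt ((x 1 - y 1)^2) := (Real.sqrt_sq_eq_abs _).symm
  _ ≤ _ := Real.sqrt_le_sqrt (by nlinarith [sq_nonneg (x 0 - y 0)])

variable {N : ℕ} {V : Finset (List ℕ)} {W : List ℕ → ℝ} {ε : ℝ}

lemma exists_leaf_ext (hV : IsNaryTree N V) {v : List ℕ} (hv : v ∈ V) :
    ∃ u, IsLeaf V u ∧ v <+: u := by
  obtain ⟨u, hu, hmax⟩ := (V.filter (fun u => v <+: u)).exists_max_image List.length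
    ⟨v, by simp [hv]⟩
  simp only [Finset.mem_filter] at hu
  refine ⟨u, ⟨hu.1, fun a ha => ?_⟩, hu.2⟩
  have hmem : u ++ [a] ∈ V.filter (fun u => v <+: u) := by
    simp only [Finset.mem_filter]
    exact ⟨ha, hu.2.trans (List.prefix_append _ _)⟩
  have := hmax _ hmem
  simp at this

lemma W_take_pos (hV : IsNaryTree N V) (hRD : RadiallyDecaying V W ε)
    {u : List ℕ} (hu : u ∈ V) (j : ℕ) : 0 < W (u.take j) :=
  hRD.2.1 _ (hV.2.1 u hu _ (List.take_prefix _ _))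

lemma W_take_succ (hV : IsNaryTree N V) (hRD : RadiallyDecaying V W ε)
    {u : List ℕ} (hu : u ∈ V) {j : ℕ} (hj : j < u.length) :
    W (u.take (j+1)) ≤ ε * W (u.take j) := by
  have hmem : u.take (j+1) ∈ V := hV.2.1 u hu _ (List.take_prefix _ _)
  have hlen : (u.take (j+1)).length = j+1 := by rw [List.length_take]; omega
  have hne : u.take (j+1) ≠ [] := by
    intro h; rw [h] at hlen; simp at hlen
  have h := hRD.2.2 _ hmem hne
  rwa [List.dropLast_eq_take, hlen, Nat.add_sub_cancel, List.take_take,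
    inf_eq_left.2 (Nat.le_succ j)] at h

lemma W_take_le (hV : IsNaryTree N V) (hRD : RadiallyDecaying V W ε) (hε : 0 < ε)
    {u : List ℕ} (hu : u ∈ V) {d : ℕ} :
    ∀ j, d + j ≤ u.length → W (u.take (d+j)) ≤ ε^j * W (u.take d) := by
  intro j
  induction j with
  | zero => intro _; simp
  | succ j ih =>
    intro h
    have h2 := ih (by omega)
    have h1 : W (u.take ((d+j)+1)) ≤ ε * W (u.take (d+j)) :=
      W_take_succ hV hRD hu (by omega)
    have hpos := W_take_pos hV hRD hu d
    calc W (u.take (d+(j+1))) = W (u.take ((d+j)+1)) := by ring_nf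
    _ ≤ ε * W (u.take (d+j)) := h1
    _ ≤ ε * (ε^j * W (u.take d)) := by nlinarith
    _ = ε^(j+1) * W (u.take d) := by ring

lemma geom_bound {r : ℝ} (h0 : 0 ≤ r) (h2 : r ≤ 1/10) :
    ∀ n, ∑ i ∈ Finset.range n, r^i ≤ 10/9 := by
  intro n
  induction n with
  | zero => norm_num
  | succ n ih =>
    rw [Finset.sum_range_succ']
    simp only [pow_succ']
    rw [← Finset.mul_sum, pow_zero]
    have hnn : (0:ℝ) ≤ ∑ i ∈ Finset.range n, r^i :=
      Finset.sum_nonneg fun i _ => pow_nonneg h0 i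
    nlinarith

lemma getD_lt (hV : IsNaryTree N V) {u : List ℕ} (hu : u ∈ V) {i : ℕ} (hi : i < u.length) :
    u.getD i 0 < N := by
  rw [List.getD_eq_getElem _ _ hi]
  exact hV.2.2.1 u hu _ (List.getElem_mem hi)

lemma psi_nonneg (hN : 2 ≤ N) (hV : IsNaryTree N V) (hRD : RadiallyDecaying V W ε)
    {u : List ℕ} (hu : u ∈ V) : 0 ≤ Psi N W u := by
  refine Finset.sum_nonneg fun i _ => ?_
  have h1 := W_take_pos hV hRD hu i
  have hN1 : (1:ℝ) ≤ (N:ℝ) - 1 := by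
    have : (2:ℝ) ≤ (N:ℝ) := by exact_mod_cast hN
    linarith
  positivity

lemma term_le (hN : 2 ≤ N) (hV : IsNaryTree N V) {u : List ℕ} (hu : u ∈ V)
    {i : ℕ} (hi : i < u.length) (hW : 0 < W (u.take i)) :
    W (u.take i) * (u.getD i 0 : ℝ) / ((N:ℝ) - 1) ≤ W (u.take i) := by
  have hN1 : (1:ℝ) ≤ (N:ℝ) - 1 := by
    have : (2:ℝ) ≤ (N:ℝ) := by exact_mod_cast hN
    linarith
  have hc : (u.getD i 0 : ℝ) ≤ (N:ℝ) - 1 := by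
    have := getD_lt hV hu hi
    have : (u.getD i 0 : ℝ) + 1 ≤ (N:ℝ) := by exact_mod_cast this
    linarith
  rw [div_le_iff₀ (by linarith)]
  nlinarith

lemma psi_le (hN : 2 ≤ N) (hV : IsNaryTree N V) (hRD : RadiallyDecaying V W ε)
    (hε : 0 < ε) (hε2 : ε ≤ 1/10) {u : List ℕ} (hu : u ∈ V) : Psi N W u ≤ 10/9 := by
  have h1 : Psi N W u ≤ ∑ i ∈ Finset.range u.length, ε^i := by
    refine Finset.sum_le_sum fun i hi => ?_
    rw [Finset.mem_range] at hi
    have hW := W_take_pos hV hRD hu i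
    refine (term_le hN hV hu hi hW).trans ?_
    have := W_take_le hV hRD hε hu (d := 0) i (by omega)
    simpa [hRD.1] using this
  exact h1.trans (geom_bound hε.le hε2 _)

lemma psi_split (hd : 2 ≤ N) {w : List ℕ} {d : ℕ} (hw : d < w.length) :
    Psi N W w = (∑ i ∈ Finset.range d, W (w.take i) * (w.getD i 0 : ℝ) / ((N:ℝ) - 1))
      + W (w.take d) * (w.getD d 0 : ℝ) / ((N:ℝ) - 1)
      + ∑ i ∈ Finset.Ico (d+1) w.length, W (w.take i) * (w.getD i 0 : ℝ) / ((N:ℝ) - 1) := by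
  rw [Psi, Finset.range_eq_Ico,
    ← Finset.sum_Ico_consecutive _ (Nat.zero_le d) hw.le,
    Finset.sum_eq_sum_Ico_succ_bot hw, ← Finset.range_eq_Ico]
  ring

lemma tail_bound (hN : 2 ≤ N) (hV : IsNaryTree N V) (hRD : RadiallyDecaying V W ε)
    (hε : 0 < ε) (hε2 : ε ≤ 1/10) {u : List ℕ} (hu : u ∈ V) {d : ℕ} (hd : d < u.length) :
    ∑ i ∈ Finset.Ico (d+1) u.length, W (u.take i) * (u.getD i 0 : ℝ) / ((N:ℝ) - 1)
      ≤ 2 * ε * W (u.take d) := by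
  have hWd := W_take_pos hV hRD hu d
  have hterm : ∀ i ∈ Finset.Ico (d+1) u.length,
      W (u.take i) * (u.getD i 0 : ℝ) / ((N:ℝ) - 1) ≤ ε^(i-d) * W (u.take d) := by
    intro i hi
    rw [Finset.mem_Ico] at hi
    have h1 := term_le hN hV hu (by omega : i < u.length) (W_take_pos hV hRD hu i)
    have h2 := W_take_le hV hRD hε hu (i - d) (show d + (i - d) ≤ u.length by omega)
    rw [show d + (i - d) = i by omega] at h2
    exact h1.trans h2
  calc ∑ i ∈ Finset.Ico (d+1) u.length, W (u.take i) * (u.getD i 0 : ℝ) / ((N:ℝ) - 1)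
      ≤ ∑ i ∈ Finset.Ico (d+1) u.length, ε^(i-d) * W (u.take d) :=
        Finset.sum_le_sum hterm
    _ = (∑ j ∈ Finset.range (u.length - (d+1)), ε^(j+1)) * W (u.take d) := by
        rw [Finset.sum_Ico_eq_sum_range, ← Finset.sum_mul]
        congr 1
        refine Finset.sum_congr rfl fun j _ => ?_
        congr 1
        omega
    _ ≤ 2 * ε * W (u.take d) := by
        have heq : ∑ j ∈ Finset.range (u.length - (d+1)), ε^(j+1)
            = ε * ∑ j ∈ Finset.range (u.length - (d+1)), ε^j := by
          rw [Finset.mul_sum]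
          exact Finset.sum_congr rfl fun j _ => by ring
        have hg := geom_bound hε.le hε2 (u.length - (d+1))
        rw [heq]
        nlinarith [mul_le_mul_of_nonneg_right (mul_le_mul_of_nonneg_left hg hε.le) hWd.le,
          mul_nonneg hε.le hWd.le]

lemma tail_nonneg (hN : 2 ≤ N) (hV : IsNaryTree N V) (hRD : RadiallyDecaying V W ε)
    {u : List ℕ} (hu : u ∈ V) {d : ℕ} :
    0 ≤ ∑ i ∈ Finset.Ico (d+1) u.length, W (u.take i) * (u.getD i 0 : ℝ) / ((N:ℝ) - 1) := by
  refine Finset.sum_nonneg fun i _ => ?_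
  have h1 := W_take_pos hV hRD hu i
  have hN1 : (1:ℝ) ≤ (N:ℝ) - 1 := by
    have : (2:ℝ) ≤ (N:ℝ) := by exact_mod_cast hN
    linarith
  positivity

lemma exists_diverge : ∀ (u v : List ℕ), ¬ u <+: v → ¬ v <+: u →
    ∃ d, u.take d = v.take d ∧ d < u.length ∧ d < v.length ∧ u.getD d 0 ≠ v.getD d 0
  | [], v, h, _ => absurd (List.nil_prefix) h
  | (a :: u), [], _, h => absurd (List.nil_prefix) h
  | (a :: u), (b :: v), h1, h2 => by
    by_cases hab : a = b
    · subst hab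
      have h1' : ¬ u <+: v := fun h => h1 (List.cons_prefix_cons.2 ⟨rfl, h⟩)
      have h2' : ¬ v <+: u := fun h => h2 (List.cons_prefix_cons.2 ⟨rfl, h⟩)
      obtain ⟨d, ht, h3, h4, h5⟩ := exists_diverge u v h1' h2'
      exact ⟨d+1, by simp [List.take_succ_cons, ht], by simp; omega, by simp; omega,
        by simpa using h5⟩
    · exact ⟨0, rfl, by simp, by simp, by simpa using hab⟩

lemma leaf_not_prefix {u v : List ℕ} (hV : IsNaryTree N V) (hu : IsLeaf V u)
    (hv : v ∈ V) (huv : u ≠ v) : ¬ u <+: v := by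
  rintro ⟨t, rfl⟩
  cases t with
  | nil => simp at huv
  | cons c t' =>
    exact hu.2 c (hV.2.1 _ hv _ ⟨t', by simp⟩)

lemma separation (hN : 2 ≤ N) (hV : IsNaryTree N V) (hRD : RadiallyDecaying V W ε)
    (hε : 0 < ε) (hεN : ε ≤ 1/(5*N)) {u v : List ℕ} (hu : IsLeaf V u) (hv : IsLeaf V v)
    (huv : u ≠ v) : W v ≤ |Psi N W u - Psi N W v| := by
  have hNR : (2:ℝ) ≤ (N:ℝ) := by exact_mod_cast hN
  have hε2 : ε ≤ 1/10 := by
    calc ε ≤ 1/(5*N) := hεN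
    _ ≤ 1/10 := by
      apply div_le_div_of_nonneg_left (by norm_num) (by norm_num)
      nlinarith
  have hp1 : ¬ u <+: v := leaf_not_prefix hV hu hv.1 huv
  have hp2 : ¬ v <+: u := leaf_not_prefix hV hv hu.1 (Ne.symm huv)
  obtain ⟨d, htake, hdu, hdv, hne⟩ := exists_diverge u v hp1 hp2
  -- common prefix facts
  have hWc : 0 < W (u.take d) := W_take_pos hV hRD hu.1 d
  have hA : (∑ i ∈ Finset.range d, W (u.take i) * (u.getD i 0 : ℝ) / ((N:ℝ) - 1))
      = ∑ i ∈ Finset.range d, W (v.take i) * (v.getD i 0 : ℝ) / ((N:ℝ) - 1) := by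
    refine Finset.sum_congr rfl fun i hi => ?_
    rw [Finset.mem_range] at hi
    have h1 : u.take i = v.take i := by
      have := congrArg (List.take i) htake
      rwa [List.take_take, List.take_take, inf_eq_left.2 hi.le] at this
    have h2 : u.getD i 0 = v.getD i 0 := by
      rw [List.getD_eq_getElem?_getD, List.getD_eq_getElem?_getD,
        ← List.getElem?_take_of_lt (l := u) (j := d) hi,
        ← List.getElem?_take_of_lt (l := v) (j := d) hi, htake]
    rw [h1, h2]
  set Ru := ∑ i ∈ Finset.Ico (d+1) u.length, W (u.take i) * (u.getD i 0 : ℝ) / ((N:ℝ) - 1)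
    with hRu
  set Rv := ∑ i ∈ Finset.Ico (d+1) v.length, W (v.take i) * (v.getD i 0 : ℝ) / ((N:ℝ) - 1)
    with hRv
  have hRu0 : 0 ≤ Ru := tail_nonneg hN hV hRD hu.1
  have hRv0 : 0 ≤ Rv := tail_nonneg hN hV hRD hv.1
  have hRu2 : Ru ≤ 2 * ε * W (u.take d) := tail_bound hN hV hRD hε hε2 hu.1 hdu
  have hRv2 : Rv ≤ 2 * ε * W (u.take d) := by
    have := tail_bound hN hV hRD hε hε2 hv.1 hdv
    rwa [← htake] at this
  set a := u.getD d 0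
  set b := v.getD d 0
  have hsub : Psi N W u - Psi N W v
      = W (u.take d) * ((a:ℝ) - (b:ℝ)) / ((N:ℝ) - 1) + (Ru - Rv) := by
    rw [psi_split hN hdu, psi_split hN hdv, hA, ← htake]
    ring
  have habs : (1:ℝ) ≤ |(a:ℝ) - (b:ℝ)| := by
    have h0 : ((a:ℤ) - (b:ℤ)) ≠ 0 := by
      intro h; apply hne; omega
    have h1 : (1:ℤ) ≤ |(a:ℤ) - (b:ℤ)| := Int.one_le_abs h0
    have : ((1:ℤ):ℝ) ≤ (|(a:ℤ) - (b:ℤ)| : ℝ) := by exact_mod_cast h1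
    simpa [abs_of_nonneg, Int.cast_abs] using this
  -- W v ≤ ε * W (u.take d)
  have hWv : W v ≤ ε * W (u.take d) := by
    have h2 := W_take_le hV hRD hε hv.1 (v.length - d) (show d + (v.length - d) ≤ v.length by omega)
    rw [show d + (v.length - d) = v.length by omega, List.take_length, ← htake] at h2
    have hk : 1 ≤ v.length - d := by omega
    have : ε^(v.length - d) ≤ ε := by
      calc ε^(v.length - d) ≤ ε^1 := pow_le_pow_of_le_one hε.le (by linarith) hk
      _ = ε := pow_one ε
    nlinarith
  have h5ε : 5 * ε ≤ 1 / ((N:ℝ) - 1) := by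
    have hN0 : (0:ℝ) < (N:ℝ) := by linarith
    have h5N : (0:ℝ) < 5*(N:ℝ) := by linarith
    have hmul : 5*(N:ℝ)*ε ≤ 1 := by
      have := mul_le_mul_of_nonneg_left hεN h5N.le
      rwa [mul_one_div, div_self h5N.ne'] at this
    have h1 : 5*ε ≤ 1/(N:ℝ) := by
      rw [le_div_iff₀ hN0]
      nlinarith
    have h2 : 1/(N:ℝ) ≤ 1/((N:ℝ)-1) := by
      apply div_le_div_of_nonneg_left (by norm_num) (by linarith)
      linarith
    linarith
  have hmain : W v ≤ W (u.take d) * |(a:ℝ) - (b:ℝ)| / ((N:ℝ) - 1) - (Ru + Rv) := by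
    have h1 : W (u.take d) * 1 / ((N:ℝ) - 1) ≤ W (u.take d) * |(a:ℝ) - (b:ℝ)| / ((N:ℝ) - 1) := by
      gcongr
      linarith
    have h3 : W (u.take d) * (5 * ε) ≤ W (u.take d) * (1 / ((N:ℝ)-1)) :=
      mul_le_mul_of_nonneg_left h5ε hWc.le
    have h4 : W (u.take d) * 1 / ((N:ℝ) - 1) = W (u.take d) * (1 / ((N:ℝ)-1)) := by ring
    nlinarith
  rw [hsub]
  have hXabs : |W (u.take d) * ((a:ℝ) - (b:ℝ)) / ((N:ℝ) - 1)|
      = W (u.take d) * |(a:ℝ) - (b:ℝ)| / ((N:ℝ) - 1) := by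
    rw [abs_div, abs_mul, abs_of_pos hWc, abs_of_pos (by linarith : (0:ℝ) < (N:ℝ) - 1)]
  have hRabs : |Ru - Rv| ≤ Ru + Rv := abs_sub_le_iff.mpr ⟨by linarith, by linarith⟩
  have htri : |W (u.take d) * ((a:ℝ) - (b:ℝ)) / ((N:ℝ) - 1)| - |Ru - Rv|
      ≤ |W (u.take d) * ((a:ℝ) - (b:ℝ)) / ((N:ℝ) - 1) + (Ru - Rv)| := by
    have h := abs_add_le (W (u.take d) * ((a:ℝ) - (b:ℝ)) / ((N:ℝ) - 1) + (Ru - Rv)) (-(Ru - Rv))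
    simp only [add_neg_cancel_right, abs_neg] at h
    linarith
  rw [hXabs] at htri
  linarith

lemma delta_facts (hV : IsNaryTree N V) (hRD : RadiallyDecaying V W ε) :
    (0 < Delta V W) ∧ ∀ v, IsLeaf V v → Delta V W ≤ W v := by
  have hfin : {w : ℝ | ∃ v, IsLeaf V v ∧ w = W v}.Finite := by
    apply Set.Finite.subset (Set.Finite.image W V.finite_toSet)
    rintro w ⟨v, hv, rfl⟩
    exact ⟨v, hv.1, rfl⟩
  have hnon : {w : ℝ | ∃ v, IsLeaf V v ∧ w = W v}.Nonempty := by
    obtain ⟨u, hu, -⟩ := exists_leaf_ext hV hV.1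
    exact ⟨W u, u, hu, rfl⟩
  constructor
  · obtain ⟨v0, hv0, he⟩ := hnon.csInf_mem hfin
    rw [Delta, he]
    exact hRD.2.1 _ hv0.1
  · intro v hv
    exact csInf_le hfin.bddBelow ⟨v, hv, rfl⟩

end Statement5Aux


/-- part 3 of Lemma 3 of the paper. -/
theorem statement5 :
    ∃ k₀ : ℝ, 0 < k₀ ∧
      ∀ (N : ℕ) (V : Finset (List ℕ)) (W : List ℕ → ℝ) (ε : ℝ),
        TreeHyp k₀ N V W ε → DepthAtLeastOne V →
          ∀ x ∈ E2set N V W,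
            Delta V W ≤ x 1 ∧
            x 1 ≤ infDist x (E1set (Delta V W)) ∧
            infDist x (E1set (Delta V W)) ≤ 2 * x 1 ∧
            x 1 ≤ infDist x (E2set N V W \ {x}) := by
  refine ⟨1/5, by norm_num, ?_⟩
  intro N V W ε hT hD x hx
  obtain ⟨hN, hV, hε, hεk, hRD⟩ := hT
  obtain ⟨v, hvleaf, rfl⟩ := hx
  have hNR : (2:ℝ) ≤ (N:ℝ) := by exact_mod_cast hN
  have hεN : ε ≤ 1/(5*N) := by
    have h : (1:ℝ)/5/(N:ℝ) = 1/(5*(N:ℝ)) := by rw [div_div]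
    calc ε ≤ 1/5/(N:ℝ) := hεk
    _ = 1/(5*(N:ℝ)) := h
  have hε2 : ε ≤ 1/10 := by
    calc ε ≤ 1/(5*(N:ℝ)) := hεN
    _ ≤ 1/10 := by
      apply div_le_div_of_nonneg_left (by norm_num) (by norm_num)
      linarith
  obtain ⟨hΔpos, hΔle⟩ := Statement5Aux.delta_facts hV hRD
  have hΔv : Delta V W ≤ W v := hΔle v hvleaf
  have hWv : 0 < W v := hRD.2.1 _ hvleaf.1
  have hΨ0 : 0 ≤ Psi N W v := Statement5Aux.psi_nonneg hN hV hRD hvleaf.1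
  have hΨ2 : Psi N W v ≤ 10/9 := Statement5Aux.psi_le hN hV hRD hε hε2 hvleaf.1
  have hE1ne : (E1set (Delta V W)).Nonempty := by
    refine ⟨pt 0 0, ?_⟩
    simp only [E1set, Set.mem_setOf_eq, Statement5Aux.pt0, Statement5Aux.pt1]
    refine ⟨⟨0, by norm_num⟩, by norm_num, by trivial⟩
  refine ⟨?_, ?_, ?_, ?_⟩
  · rw [Statement5Aux.pt1]; exact hΔv
  · rw [Statement5Aux.pt1]
    by_contra hcon
    push_neg at hcon
    obtain ⟨y, hy, hdy⟩ := (infDist_lt_iff hE1ne).1 hcon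
    simp only [E1set, Set.mem_setOf_eq] at hy
    have h1 := Statement5Aux.coord1_le_dist (pt (Psi N W v) (W v)) y
    rw [Statement5Aux.pt1, hy.2.2, sub_zero, abs_of_pos hWv] at h1
    linarith
  · rw [Statement5Aux.pt1]
    set Δ := Delta V W with hΔ
    set Ψ := Psi N W v with hΨ
    set n : ℤ := ⌊Ψ/Δ⌋ with hn
    have hn0 : (0:ℤ) ≤ n := Int.floor_nonneg.2 (div_nonneg hΨ0 hΔpos.le)
    have hnle : (n:ℝ)*Δ ≤ Ψ := (le_div_iff₀ hΔpos).1 (Int.floor_le _)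
    have hngt : Ψ < ((n:ℝ)+1)*Δ := by
      have := Int.lt_floor_add_one (Ψ/Δ)
      rw [div_lt_iff₀ hΔpos] at this
      exact_mod_cast this
    have hymem : pt ((n:ℝ)*Δ) 0 ∈ E1set Δ := by
      simp only [E1set, Set.mem_setOf_eq, Statement5Aux.pt0, Statement5Aux.pt1]
      refine ⟨⟨n, by trivial⟩, ⟨?_, ?_⟩, by trivial⟩
      · have : (0:ℝ) ≤ (n:ℝ) := by exact_mod_cast hn0
        positivity
      · linarith
    refine (infDist_le_dist_of_mem hymem).trans ?_
    rw [Statement5Aux.dist_eq_pt]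
    simp only [Statement5Aux.pt0, Statement5Aux.pt1]
    have hb : (Ψ - (n:ℝ)*Δ)^2 + (W v - 0)^2 ≤ (2 * W v)^2 := by nlinarith
    calc Real.sqrt ((Ψ - (n:ℝ)*Δ)^2 + (W v - 0)^2) ≤ Real.sqrt ((2 * W v)^2) :=
      Real.sqrt_le_sqrt hb
    _ = 2 * W v := Real.sqrt_sq (by linarith)
  · rw [Statement5Aux.pt1]
    -- find a second leaf distinct from v
    obtain ⟨a0, ha0⟩ := hD
    have hcard : 2 ≤ ((Finset.range N).filter (fun a => ([] : List ℕ) ++ [a] ∈ V)).card := by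
      apply hV.2.2.2 [] hV.1
      exact ⟨a0, by simpa using ha0⟩
    obtain ⟨A, hA, B, hB, hAB⟩ := Finset.one_lt_card.1 (lt_of_lt_of_le one_lt_two hcard)
    simp only [Finset.mem_filter, List.nil_append] at hA hB
    obtain ⟨u1, hu1, hpre1⟩ := Statement5Aux.exists_leaf_ext hV hA.2
    obtain ⟨u2, hu2, hpre2⟩ := Statement5Aux.exists_leaf_ext hV hB.2
    obtain ⟨t1, ht1⟩ := hpre1
    obtain ⟨t2, ht2⟩ := hpre2
    have hu12 : u1 ≠ u2 := by
      rw [← ht1, ← ht2]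
      intro h
      simp only [List.singleton_append, List.cons.injEq] at h
      exact hAB h.1
    obtain ⟨u, huleaf, huv⟩ : ∃ u, IsLeaf V u ∧ u ≠ v := by
      by_cases h : u1 = v
      · exact ⟨u2, hu2, by rw [← h]; exact (Ne.symm hu12)⟩
      · exact ⟨u1, hu1, h⟩
    have hsep := Statement5Aux.separation hN hV hRD hε hεN huleaf hvleaf huv
    have hne : pt (Psi N W u) (W u) ≠ pt (Psi N W v) (W v) := by
      intro h
      have h0 := congrArg (fun z : Pt => z 0) h
      simp only [Statement5Aux.pt0] at h0
      rw [h0, sub_self, abs_zero] at hsep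
      linarith
    have hE2ne : (E2set N V W \ {pt (Psi N W v) (W v)}).Nonempty := by
      refine ⟨pt (Psi N W u) (W u), ⟨⟨u, huleaf, rfl⟩, ?_⟩⟩
      simp only [Set.mem_singleton_iff]
      exact hne
    by_contra hcon
    push_neg at hcon
    obtain ⟨y, hy, hdy⟩ := (infDist_lt_iff hE2ne).1 hcon
    obtain ⟨hyE2, hyne⟩ := hy
    obtain ⟨w, hwleaf, rfl⟩ := hyE2
    have hwv : w ≠ v := by
      intro h; subst h
      exact hyne (Set.mem_singleton _)
    have hsepw := Statement5Aux.separation hN hV hRD hε hεN hwleaf hvleaf hwv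
    have h1 := Statement5Aux.coord0_le_dist (pt (Psi N W v) (W v)) (pt (Psi N W w) (W w))
    rw [Statement5Aux.pt0, Statement5Aux.pt0, abs_sub_comm] at h1
    linarith
end
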